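/- Let (F_k, m_k) be a DBM-sequence, k ∈ ℕ, and φ_1,…,φ_n ∈ SL. Then the k-depth belief function satisfies the n-monotonicity inequality B_k(φ_1 ∨ ⋯ ∨ φ_n) ≥ Σ over nonempty S ⊆ {1,…,n} of (−1)^{|S|−1} B_k(⋀_{i∈S} φ_i). -/

import Mathlib

/-!
Common framework: Depth-Bounded Boolean Logics, depth-bounded trees/forests,
mass functions and depth-bounded belief functions.
-/

namespace DBB

/-- Sentences of a propositional language with propositional variables in `V`,
connectives ¬, ∧, ∨ and the constant ⊥. -/
inductive Sentence (V : Type) : Type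
  | var  : V → Sentence V
  | bot  : Sentence V
  | neg  : Sentence V → Sentence V
  | conj : Sentence V → Sentence V → Sentence V
  | disj : Sentence V → Sentence V → Sentence V
  deriving DecidableEq

variable {V : Type}

/-- Boolean evaluation of a sentence under a valuation of the variables. -/
def eval (v : V → Bool) : Sentence V → Bool
  | .var p => v p
  | .bot => false
  | .neg φ => !(eval v φ)
  | .conj φ ψ => eval v φ && eval v ψ
  | .disj φ ψ => eval v φ || eval v ψ

/-- Classical (semantic) consequence `Γ ⊢ φ`. -/
def CC (Γ : Set (Sentence V)) (φ : Sentence V) : Prop :=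
  ∀ v : V → Bool, (∀ γ ∈ Γ, eval v γ = true) → eval v φ = true

/-- The 0-depth consequence relation `Γ ⊢₀ φ`: closure of `Γ` under the standard
introduction and elimination rules for ¬, ∧, ∨, ⊥. -/
inductive Der0 : Set (Sentence V) → Sentence V → Prop
  | prem {Γ : Set (Sentence V)} {φ} (h : φ ∈ Γ) : Der0 Γ φ
  | andI {Γ φ ψ} : Der0 Γ φ → Der0 Γ ψ → Der0 Γ (.conj φ ψ)
  | andE1 {Γ φ ψ} : Der0 Γ (.conj φ ψ) → Der0 Γ φ
  | andE2 {Γ φ ψ} : Der0 Γ (.conj φ ψ) → Der0 Γ ψ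
  | orI1 {Γ φ ψ} : Der0 Γ φ → Der0 Γ (.disj φ ψ)
  | orI2 {Γ φ ψ} : Der0 Γ ψ → Der0 Γ (.disj φ ψ)
  | orE1 {Γ φ ψ} : Der0 Γ (.disj φ ψ) → Der0 Γ (.neg φ) → Der0 Γ ψ
  | orE2 {Γ φ ψ} : Der0 Γ (.disj φ ψ) → Der0 Γ (.neg ψ) → Der0 Γ φ
  | negAndI1 {Γ φ ψ} : Der0 Γ (.neg φ) → Der0 Γ (.neg (.conj φ ψ))
  | negAndI2 {Γ φ ψ} : Der0 Γ (.neg ψ) → Der0 Γ (.neg (.conj φ ψ))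
  | negAndE1 {Γ φ ψ} : Der0 Γ (.neg (.conj φ ψ)) → Der0 Γ φ → Der0 Γ (.neg ψ)
  | negAndE2 {Γ φ ψ} : Der0 Γ (.neg (.conj φ ψ)) → Der0 Γ ψ → Der0 Γ (.neg φ)
  | negOrI {Γ φ ψ} : Der0 Γ (.neg φ) → Der0 Γ (.neg ψ) → Der0 Γ (.neg (.disj φ ψ))
  | negOrE1 {Γ φ ψ} : Der0 Γ (.neg (.disj φ ψ)) → Der0 Γ (.neg φ)
  | negOrE2 {Γ φ ψ} : Der0 Γ (.neg (.disj φ ψ)) → Der0 Γ (.neg ψ)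
  | dnI {Γ φ} : Der0 Γ φ → Der0 Γ (.neg (.neg φ))
  | dnE {Γ φ} : Der0 Γ (.neg (.neg φ)) → Der0 Γ φ
  | botI {Γ φ} : Der0 Γ φ → Der0 Γ (.neg φ) → Der0 Γ .bot
  | botE {Γ φ} : Der0 Γ .bot → Der0 Γ φ

/-- The set of subsentences of a sentence. -/
def subs : Sentence V → Set (Sentence V)
  | .var p => {Sentence.var p}
  | .bot => {Sentence.bot}
  | .neg φ => insert (.neg φ) (subs φ)
  | .conj φ ψ => insert (.conj φ ψ) (subs φ ∪ subs ψ)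
  | .disj φ ψ => insert (.disj φ ψ) (subs φ ∪ subs ψ)

/-- Subsentences of a set of sentences. -/
def subsSet (Γ : Set (Sentence V)) : Set (Sentence V) := ⋃ γ ∈ Γ, subs γ

/-- The k-depth consequence relations `Γ ⊢ₖ φ`: for `k > 0`, `Γ ⊢ₖ φ` iff there is a
subsentence `β` of `Γ ∪ {φ}` such that `Γ, β ⊢_{k-1} φ` and `Γ, ¬β ⊢_{k-1} φ`. -/
def DerK : ℕ → Set (Sentence V) → Sentence V → Prop
  | 0, Γ, φ => Der0 Γ φ
  | k+1, Γ, φ => ∃ β, β ∈ subsSet (insert φ Γ) ∧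
      DerK k (insert β Γ) φ ∧ DerK k (insert (Sentence.neg β) Γ) φ

/-- Elements of `SL ∪ {*}`: `none` is the empty information `*`, `some γ` is the sentence `γ`.
`prems` gives the corresponding set of premises. -/
def prems : Option (Sentence V) → Set (Sentence V)
  | none => ∅
  | some γ => {γ}

/-- `r ⊢₀ φ` for `r ∈ SL ∪ {*}`. -/
def Der0O (r : Option (Sentence V)) (φ : Sentence V) : Prop := Der0 (prems r) φ

/-- `r ⊢ₖ φ` for `r ∈ SL ∪ {*}`. -/
def DerKO (k : ℕ) (r : Option (Sentence V)) (φ : Sentence V) : Prop := DerK k (prems r) φ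

/-- classical consequence from `r ∈ SL ∪ {*}`. -/
def CCO (r : Option (Sentence V)) (φ : Sentence V) : Prop := CC (prems r) φ

/-- `r ⊢₀ s` where also the conclusion may be the empty information `*`
(deriving `*` is trivial). -/
def Der0OO (r : Option (Sentence V)) : Option (Sentence V) → Prop
  | none => True
  | some φ => Der0O r φ

/-! ### Depth-bounded trees -/

/-- Binary trees whose internal nodes are labelled by the branching sentence `β`:
a node with branching sentence `β` and current information `α` has children carrying
the information `α ∧ β` and `α ∧ ¬β` respectively. -/
inductive DBTree (V : Type) : Type
  | leaf : DBTree V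
  | node : Sentence V → DBTree V → DBTree V → DBTree V
  deriving DecidableEq

/-- The information carried by a child of a node with information `r ∈ SL ∪ {*}` and
branching sentence `β`: `r ∧ β` (or just `β` when `r = *`). -/
def extend (r : Option (Sentence V)) (β : Sentence V) : Option (Sentence V) :=
  some (match r with
    | none => β
    | some α => Sentence.conj α β)

/-- The set `Le(T)` of labels of the leaves of a tree `t` rooted in `r ∈ SL ∪ {*}`. -/
def leafLabels [DecidableEq V] : Option (Sentence V) → DBTree V → Finset (Option (Sentence V))
  | r, .leaf => {r}
  | r, .node β t₁ t₂ =>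
      leafLabels (extend r β) t₁ ∪ leafLabels (extend r (.neg β)) t₂

/-- The number of leaves of a tree. -/
def numLeaves : DBTree V → ℕ
  | .leaf => 1
  | .node _ t₁ t₂ => numLeaves t₁ + numLeaves t₂

/-- `Grow k t t'`: `t'` is obtained from `t` by expanding a (possibly empty) subset of the
depth-`k` leaves of `t`, each expanded leaf getting two children via some branching sentence. -/
inductive Grow : ℕ → DBTree V → DBTree V → Prop
  | keep (k : ℕ) : Grow k .leaf .leaf
  | expand (β : Sentence V) : Grow 0 .leaf (.node β .leaf .leaf)
  | node {k : ℕ} {t₁ t₁' t₂ t₂' : DBTree V} (β : Sentence V) :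
      Grow k t₁ t₁' → Grow k t₂ t₂' →
      Grow (k+1) (.node β t₁ t₂) (.node β t₁' t₂')

/-- A depth-bounded tree sequence (DBT-sequence): `T₀` is a single node, and `T_{k+1}` is
obtained from `T_k` by branching at least one node of depth `k`. -/
structure DBTSeq (V : Type) where
  tree : ℕ → DBTree V
  init : tree 0 = DBTree.leaf
  grow : ∀ k, Grow k (tree k) (tree (k+1))
  progress : ∀ k, tree (k+1) ≠ tree k

/-- `t` is a tree of depth `k` belonging to some DBT-sequence. -/
def IsDepthKTree (k : ℕ) (t : DBTree V) : Prop := ∃ S : DBTSeq V, S.tree k = t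

/-- `r` decides `φ`: `r ⊢₀ φ` or `r ⊢₀ ¬φ`. -/
def Decides (r : Option (Sentence V)) (φ : Sentence V) : Prop :=
  Der0O r φ ∨ Der0O r (.neg φ)

/-- `|dec(Γ, φ)|`: the number of elements of `Γ` deciding `φ`. -/
noncomputable def decCount [DecidableEq V] (Γ : Finset (Option (Sentence V)))
    (φ : Sentence V) : ℕ := by
  classical exact (Γ.filter (fun α => Decides α φ)).card

/-- A tree rooted in `r` is `{φ}`-closed iff all its leaves decide `φ`. -/
def TreeClosed [DecidableEq V] (r : Option (Sentence V)) (t : DBTree V) (φ : Sentence V) : Prop :=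
  ∀ α ∈ leafLabels r t, Decides α φ

/-- A tree `t` of depth `k` rooted in `r` is `{φ}`-maximal iff no depth-`k` tree with the same
root has strictly more leaves deciding `φ`. -/
def TreeMaximal [DecidableEq V] (r : Option (Sentence V)) (k : ℕ) (t : DBTree V)
    (φ : Sentence V) : Prop :=
  ∀ t' : DBTree V, IsDepthKTree k t' →
    decCount (leafLabels r t') φ ≤ decCount (leafLabels r t) φ

/-- A tree rooted in `r` is free of deep contradictions iff every classically inconsistent
leaf is already 0-depth inconsistent. -/
def TreeFreeDC [DecidableEq V] (r : Option (Sentence V)) (t : DBTree V) : Prop :=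
  ∀ α ∈ leafLabels r t, CCO α Sentence.bot → Der0O α Sentence.bot

/-! ### Depth-bounded forests -/

/-- A depth-bounded forest sequence (DBF-sequence) based on the support set
`Supp ⊆ SL ∪ {*}`: a DBT-sequence rooted in `γ` for each `γ ∈ Supp`. -/
structure DBFSeq (V : Type) where
  Supp : Finset (Option (Sentence V))
  suppNE : Supp.Nonempty
  tree : Option (Sentence V) → ℕ → DBTree V
  init : ∀ γ ∈ Supp, tree γ 0 = DBTree.leaf
  grow : ∀ γ ∈ Supp, ∀ k, Grow k (tree γ k) (tree γ (k+1))
  progress : ∀ γ ∈ Supp, ∀ k, tree γ (k+1) ≠ tree γ k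

/-- `Le(F_k)`: the leaves of the depth-`k` forest of a DBF-sequence. -/
noncomputable def DBFSeq.leaves [DecidableEq V] (F : DBFSeq V) (k : ℕ) :
    Finset (Option (Sentence V)) := by
  classical exact F.Supp.biUnion (fun γ => leafLabels γ (F.tree γ k))

/-- The depth-`k` forest is `{φ}`-closed (tree-wise). -/
def DBFSeq.Closed [DecidableEq V] (F : DBFSeq V) (k : ℕ) (φ : Sentence V) : Prop :=
  ∀ γ ∈ F.Supp, TreeClosed γ (F.tree γ k) φ

/-- The depth-`k` forest is `{φ}`-maximal (tree-wise). -/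
def DBFSeq.Maximal [DecidableEq V] (F : DBFSeq V) (k : ℕ) (φ : Sentence V) : Prop :=
  ∀ γ ∈ F.Supp, TreeMaximal γ k (F.tree γ k) φ

/-- The depth-`k` forest is free of deep contradictions (tree-wise). -/
def DBFSeq.FreeDC [DecidableEq V] (F : DBFSeq V) (k : ℕ) : Prop :=
  ∀ γ ∈ F.Supp, TreeFreeDC γ (F.tree γ k)

/-- `MassStep m m' r t t'`: the mass function `m'` refines `m` along the expansion of `t`
into `t'` (leaves keep their mass; the mass of an expanded leaf is split among its
two children). -/
inductive MassStep (m m' : Option (Sentence V) → ℝ) :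
    Option (Sentence V) → DBTree V → DBTree V → Prop
  | keep {r : Option (Sentence V)} :
      m' r = m r → MassStep m m' r .leaf .leaf
  | split {r : Option (Sentence V)} {β : Sentence V} :
      m' (extend r β) + m' (extend r (.neg β)) = m r →
      MassStep m m' r .leaf (.node β .leaf .leaf)
  | node {r : Option (Sentence V)} {β : Sentence V} {t₁ t₁' t₂ t₂' : DBTree V} :
      MassStep m m' (extend r β) t₁ t₁' →
      MassStep m m' (extend r (.neg β)) t₂ t₂' →
      MassStep m m' r (.node β t₁ t₂) (.node β t₁' t₂')

/-- A depth-bounded mass sequence (DBM-sequence): a DBF-sequence free of deep contradictions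
together with probability mass functions `m_k` over `Le(F_k)` such that the mass of each leaf
of `F_k` is either kept (if it remains a leaf) or split among its two children in `F_{k+1}`. -/
structure DBMSeq (V : Type) [DecidableEq V] extends DBFSeq V where
  m : ℕ → Option (Sentence V) → ℝ
  nonneg : ∀ k, ∀ α ∈ toDBFSeq.leaves k, 0 ≤ m k α
  total : ∀ k, ∑ α ∈ toDBFSeq.leaves k, m k α = 1
  incZero : ∀ k, ∀ α ∈ toDBFSeq.leaves k, Der0O α Sentence.bot → m k α = 0
  freeDC : ∀ k, toDBFSeq.FreeDC k
  massStep : ∀ γ ∈ toDBFSeq.Supp, ∀ k,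
      MassStep (m k) (m (k+1)) γ (toDBFSeq.tree γ k) (toDBFSeq.tree γ (k+1))

/-- The k-depth belief function `B_k(φ) = m_k(b_k(φ))` where
`b_k(φ) = {α ∈ Le(F_k) : α ⊢₀ φ, α ⊬₀ ⊥}`. -/
noncomputable def DBMSeq.B [DecidableEq V] (M : DBMSeq V) (k : ℕ) (φ : Sentence V) : ℝ := by
  classical exact ∑ α ∈ M.toDBFSeq.leaves k,
    if Der0O α φ ∧ ¬ Der0O α Sentence.bot then M.m k α else 0

/-- The k-depth plausibility function `Pl_k(φ) = m_k(pl_k(φ))` where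
`pl_k(φ) = {α ∈ Le(F_k) : α ⊬₀ ¬φ}`. -/
noncomputable def DBMSeq.Pl [DecidableEq V] (M : DBMSeq V) (k : ℕ) (φ : Sentence V) : ℝ := by
  classical exact ∑ α ∈ M.toDBFSeq.leaves k,
    if ¬ Der0O α (Sentence.neg φ) then M.m k α else 0

/-! ### Auxiliary notions -/

/-- A probability function on `SL`: a `[0,1]`-valued function which is normalised on
classical tautologies and additive on classically incompatible disjuncts. -/
def IsProbability (P : Sentence V → ℝ) : Prop :=
  (∀ φ, 0 ≤ P φ ∧ P φ ≤ 1) ∧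
  (∀ φ, CC (∅ : Set (Sentence V)) φ → P φ = 1) ∧
  (∀ φ ψ, CC (∅ : Set (Sentence V)) (.neg (.conj φ ψ)) →
    P (.disj φ ψ) = P φ + P ψ)

/-- The literal on `p` prescribed by the valuation `v`. -/
def litOf (v : V → Bool) (p : V) : Sentence V :=
  if v p then .var p else .neg (.var p)

/-- Left-associated conjunction `φ ∧ ψ₁ ∧ ⋯ ∧ ψₙ`. -/
def listConj : Sentence V → List (Sentence V) → Sentence V
  | φ, [] => φ
  | φ, ψ :: l => listConj (.conj φ ψ) l

/-- Left-associated disjunction `φ ∨ ψ₁ ∨ ⋯ ∨ ψₙ`. -/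
def listDisj : Sentence V → List (Sentence V) → Sentence V
  | φ, [] => φ
  | φ, ψ :: l => listDisj (.disj φ ψ) l

/-- Conjunction of a list of sentences (`⊥` for the empty list, which is never used). -/
def conjList : List (Sentence V) → Sentence V
  | [] => .bot
  | ψ :: l => listConj ψ l

/-- Disjunction of a list of sentences (`⊥` for the empty list, which is never used). -/
def disjList : List (Sentence V) → Sentence V
  | [] => .bot
  | ψ :: l => listDisj ψ l

/-- `α` is an atom of the language: a maximal (classically consistent) conjunction of
literals, with exactly one literal per propositional variable. -/
def IsAtom (α : Sentence V) : Prop :=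
  ∃ (v : V → Bool) (l : List V), l.Nodup ∧ (∀ p : V, p ∈ l) ∧ l ≠ [] ∧
    α = conjList (l.map (litOf v))

/-- The conjunction `⋀_{i ∈ S} φ_i` of a finite set of indexed sentences. -/
def finsetConj {n : ℕ} (φ : Fin n → Sentence V) (S : Finset (Fin n)) : Sentence V :=
  conjList ((S.sort (· ≤ ·)).map φ)

/-- The finite set of subsentences of a sentence. -/
def subsF [DecidableEq V] : Sentence V → Finset (Sentence V)
  | .var p => {Sentence.var p}
  | .bot => {Sentence.bot}
  | .neg φ => insert (.neg φ) (subsF φ)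
  | .conj φ ψ => insert (.conj φ ψ) (subsF φ ∪ subsF ψ)
  | .disj φ ψ => insert (.disj φ ψ) (subsF φ ∪ subsF ψ)

/-- All branching sentences of the tree belong to `S`. -/
def BranchesIn [DecidableEq V] : DBTree V → Finset (Sentence V) → Prop
  | .leaf, _ => True
  | .node β t₁ t₂, S => β ∈ S ∧ BranchesIn t₁ S ∧ BranchesIn t₂ S




lemma der0_listConj {Γ : Set (Sentence V)} {φ : Sentence V} {l : List (Sentence V)} :
    Der0 Γ (listConj φ l) ↔ Der0 Γ φ ∧ ∀ ψ ∈ l, Der0 Γ ψ := by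
  induction l generalizing φ with
  | nil => simp [listConj]
  | cons a l ih =>
    simp only [listConj, ih, List.mem_cons]
    constructor
    · rintro ⟨h, hl⟩
      exact ⟨Der0.andE1 h, fun ψ hψ => by
        rcases hψ with rfl | hψ
        · exact Der0.andE2 h
        · exact hl ψ hψ⟩
    · rintro ⟨h, hl⟩
      exact ⟨Der0.andI h (hl a (Or.inl rfl)), fun ψ hψ => hl ψ (Or.inr hψ)⟩

lemma der0_conjList {Γ : Set (Sentence V)} {l : List (Sentence V)} (hl : l ≠ []) :
    Der0 Γ (conjList l) ↔ ∀ ψ ∈ l, Der0 Γ ψ := by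
  cases l with
  | nil => exact absurd rfl hl
  | cons a l => simp [conjList, der0_listConj]

lemma der0_listDisj_left {Γ : Set (Sentence V)} {φ : Sentence V} {l : List (Sentence V)}
    (h : Der0 Γ φ) : Der0 Γ (listDisj φ l) := by
  induction l generalizing φ with
  | nil => exact h
  | cons a l ih => exact ih (Der0.orI1 h)

lemma der0_listDisj_mem {Γ : Set (Sentence V)} {φ ψ : Sentence V} {l : List (Sentence V)}
    (hψ : ψ ∈ l) (h : Der0 Γ ψ) : Der0 Γ (listDisj φ l) := by
  induction l generalizing φ with
  | nil => cases hψ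
  | cons a l ih =>
    rcases List.mem_cons.1 hψ with rfl | hm
    · show Der0 Γ (listDisj (.disj φ ψ) l)
      exact der0_listDisj_left (Der0.orI2 h)
    · exact ih hm

lemma der0_disjList {Γ : Set (Sentence V)} {ψ : Sentence V} {l : List (Sentence V)}
    (hψ : ψ ∈ l) (h : Der0 Γ ψ) : Der0 Γ (disjList l) := by
  cases l with
  | nil => cases hψ
  | cons a l =>
    rcases List.mem_cons.1 hψ with rfl | hm
    · exact der0_listDisj_left h
    · exact der0_listDisj_mem hm h

lemma aux_alt_sum {ι : Type} [DecidableEq ι] (A : Finset ι) (hA : A.Nonempty) :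
    ∑ S ∈ A.powerset.filter (fun S => S.Nonempty), (-1:ℝ)^(S.card-1) = 1 := by
  have h0 : ∑ S ∈ A.powerset, (-1:ℝ)^S.card = 0 := by
    have := Finset.sum_powerset_neg_one_pow_card_of_nonempty hA
    exact_mod_cast this
  have hsplit := Finset.sum_filter_add_sum_filter_not A.powerset
      (fun S => S.Nonempty) (fun S => (-1:ℝ)^S.card)
  have hempty : A.powerset.filter (fun S => ¬S.Nonempty) = {∅} := by
    ext S
    simp only [Finset.mem_filter, Finset.mem_powerset, Finset.not_nonempty_iff_eq_empty,
      Finset.mem_singleton]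
    constructor
    · rintro ⟨_, h⟩; exact h
    · rintro rfl; exact ⟨Finset.empty_subset _, rfl⟩
  rw [hempty, h0] at hsplit
  simp only [Finset.sum_singleton, Finset.card_empty, pow_zero] at hsplit
  have h1 : ∑ S ∈ A.powerset.filter (fun S => S.Nonempty), (-1:ℝ)^S.card = -1 := by
    linarith
  have hcongr : ∀ S ∈ A.powerset.filter (fun S => S.Nonempty),
      (-1:ℝ)^(S.card-1) = -((-1:ℝ)^S.card) := by
    intro S hS
    have hc : 1 ≤ S.card := Finset.card_pos.2 (Finset.mem_filter.1 hS).2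
    conv_rhs => rw [← Nat.sub_add_cancel hc]
    rw [pow_succ]; ring
  rw [Finset.sum_congr rfl hcongr, Finset.sum_neg_distrib, h1]
  norm_num

/-- n-monotonicity of k-depth belief functions:
`B_k(φ₁ ∨ ⋯ ∨ φₙ) ≥ Σ_{∅ ≠ S ⊆ {1,…,n}} (−1)^{|S|−1} B_k(⋀_{i ∈ S} φ_i)`. -/
theorem belief_n_monotone {V : Type} [DecidableEq V] [Fintype V]
    (M : DBMSeq V) (k : ℕ) {n : ℕ} (hn : 0 < n) (φ : Fin n → Sentence V) :
    ∑ S ∈ Finset.univ.filter (fun S : Finset (Fin n) => S.Nonempty),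
        (-1 : ℝ) ^ (S.card - 1) * M.B k (finsetConj φ S)
      ≤ M.B k (disjList (List.ofFn φ)) := by
  classical
  unfold DBMSeq.B
  simp_rw [Finset.mul_sum]
  rw [Finset.sum_comm]
  apply Finset.sum_le_sum
  intro α hα
  have hm : 0 ≤ M.m k α := M.nonneg k α hα
  by_cases hinc : Der0O α Sentence.bot
  · simp [hinc]
  · set A : Finset (Fin n) := Finset.univ.filter (fun i => Der0O α (φ i)) with hA
    have hconj : ∀ S : Finset (Fin n), S.Nonempty →
        (Der0O α (finsetConj φ S) ↔ S ⊆ A) := by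
      intro S hS
      obtain ⟨i0, hi0⟩ := hS
      have hmem : φ i0 ∈ (S.sort (· ≤ ·)).map φ :=
        List.mem_map.2 ⟨i0, (Finset.mem_sort _).2 hi0, rfl⟩
      have hne : ((S.sort (· ≤ ·)).map φ) ≠ [] := List.ne_nil_of_mem hmem
      rw [finsetConj, show (Der0O α (conjList ((S.sort (· ≤ ·)).map φ)) ↔ _) from
        der0_conjList hne]
      constructor
      · intro h i hi
        simp only [hA, Finset.mem_filter, Finset.mem_univ, true_and]
        exact h (φ i) (List.mem_map.2 ⟨i, (Finset.mem_sort _).2 hi, rfl⟩)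
      · intro h ψ hψ
        obtain ⟨i, hi, rfl⟩ := List.mem_map.1 hψ
        have := h ((Finset.mem_sort _).1 hi)
        exact (show Der0O α (φ i) by
          simpa only [hA, Finset.mem_filter, Finset.mem_univ, true_and] using this)
    have hterm : ∀ S ∈ Finset.univ.filter (fun S : Finset (Fin n) => S.Nonempty),
        (-1 : ℝ) ^ (S.card - 1) *
          (if Der0O α (finsetConj φ S) ∧ ¬ Der0O α Sentence.bot then M.m k α else 0)
        = if S ⊆ A then (-1 : ℝ) ^ (S.card - 1) * M.m k α else 0 := by
      intro S hS
      have hSne : S.Nonempty := (Finset.mem_filter.1 hS).2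
      by_cases hsub : S ⊆ A
      · rw [if_pos ⟨(hconj S hSne).2 hsub, hinc⟩, if_pos hsub]
      · rw [if_neg (fun h => hsub ((hconj S hSne).1 h.1)), if_neg hsub, mul_zero]
    rw [Finset.sum_congr rfl hterm, Finset.sum_ite, Finset.sum_const_zero, add_zero]
    have hset : (Finset.univ.filter (fun S : Finset (Fin n) => S.Nonempty)).filter
        (fun S => S ⊆ A) = A.powerset.filter (fun S => S.Nonempty) := by
      ext S
      simp only [Finset.mem_filter, Finset.mem_univ, true_and, Finset.mem_powerset]
      tauto
    rw [hset]
    rcases A.eq_empty_or_nonempty with hAe | hAne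
    · rw [hAe]
      simp only [Finset.powerset_empty, Finset.filter_singleton]
      rw [if_neg (by simp)]
      simp only [Finset.sum_empty]
      split <;> [exact hm; exact le_refl 0]
    · rw [← Finset.sum_mul, aux_alt_sum A hAne, one_mul]
      obtain ⟨i, hi⟩ := hAne
      have hder : Der0O α (φ i) := by
        simpa only [hA, Finset.mem_filter, Finset.mem_univ, true_and] using hi
      have hdisj : Der0O α (disjList (List.ofFn φ)) :=
        der0_disjList (by simp [List.mem_ofFn]) hder
      rw [if_pos ⟨hdisj, hinc⟩]

end DBB
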